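/- For y, h ∈ E, the Gateaux derivative of J(y) = ∑_{k=1}^{N+2} (p(k)/2)(Δ²y(k-2))² − ∑_{k=1}^{N+1} (q(k)/2)(Δy(k-1))² + ∑_{k=1}^{N} F(k,y(k)) is given by the summation-by-parts identity δJ(y;h) = ∑_{k=1}^{N} [Δ²(p(k)Δ²y(k-2)) + Δ(q(k)Δy(k-1)) + f(k,y(k))]·h(k). -/

import Mathlib

open Finset

/-- Forward difference `Δy(k) = y(k+1) - y(k)`. -/
def fd (y : ℤ → ℝ) (k : ℤ) : ℝ := y (k + 1) - y k

/-- Second forward difference `Δ²y(k) = y(k+2) - 2y(k+1) + y(k)`. -/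
def fd2 (y : ℤ → ℝ) (k : ℤ) : ℝ := y (k + 2) - 2 * y (k + 1) + y k

/-- Dirichlet boundary conditions `y(-1) = y(0) = y(N+1) = y(N+2) = 0`. -/
def bc (N : ℕ) (y : ℤ → ℝ) : Prop :=
  y (-1) = 0 ∧ y 0 = 0 ∧ y ((N : ℤ) + 1) = 0 ∧ y ((N : ℤ) + 2) = 0

/-- `y` satisfies `Δ²(p(k)Δ²y(k-2)) + Δ(q(k)Δy(k-1)) + f(k,y(k)) = 0` for `k ∈ Z[1,N]`. -/
def solves (N : ℕ) (p q : ℤ → ℝ) (f : ℤ → ℝ → ℝ) (y : ℤ → ℝ) : Prop :=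
  ∀ k ∈ Finset.Icc (1 : ℤ) (N : ℤ),
    fd2 (fun j => p j * fd2 y (j - 2)) k
      + fd (fun j => q j * fd y (j - 1)) k + f k (y k) = 0

/-- `F(k,s) = ∫₀ˢ f(k,t) dt`. -/
noncomputable def Fint (f : ℤ → ℝ → ℝ) (k : ℤ) (s : ℝ) : ℝ := ∫ t in (0 : ℝ)..s, f k t

/-- The energy functional
`J(y) = ∑_{k=1}^{N+2} (p(k)/2)(Δ²y(k-2))² − ∑_{k=1}^{N+1} (q(k)/2)(Δy(k-1))² + ∑_{k=1}^{N} F(k,y(k))`. -/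
noncomputable def J (N : ℕ) (p q : ℤ → ℝ) (f : ℤ → ℝ → ℝ) (y : ℤ → ℝ) : ℝ :=
  ∑ k ∈ Finset.Icc (1 : ℤ) ((N : ℤ) + 2), p k / 2 * (fd2 y (k - 2)) ^ 2
    - ∑ k ∈ Finset.Icc (1 : ℤ) ((N : ℤ) + 1), q k / 2 * (fd y (k - 1)) ^ 2
    + ∑ k ∈ Finset.Icc (1 : ℤ) (N : ℤ), Fint f k (y k)

lemma sum_shift' (a b c : ℤ) (φ : ℤ → ℝ) :
    ∑ k ∈ Icc a b, φ (k + c) = ∑ k ∈ Icc (a + c) (b + c), φ k := by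
  apply Finset.sum_nbij' (fun k => k + c) (fun k => k - c) <;>
    intros <;> simp_all [Finset.mem_Icc] <;> omega

lemma sbp2 (N : ℕ) (g h : ℤ → ℝ) (hh : bc N h) :
    ∑ k ∈ Icc (1 : ℤ) ((N : ℤ) + 2), g k * fd2 h (k - 2)
      = ∑ k ∈ Icc (1 : ℤ) (N : ℤ), fd2 g k * h k := by
  obtain ⟨h1, h0, hn1, hn2⟩ := hh
  have S1 : ∑ k ∈ Icc (1 : ℤ) ((N : ℤ) + 2), g k * h k
      = ∑ k ∈ Icc (1 : ℤ) (N : ℤ), g k * h k := by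
    symm
    apply Finset.sum_subset
    · intro k hk; simp only [mem_Icc] at *; omega
    · intro k hk hk'; simp only [mem_Icc] at *
      have : k = (N : ℤ) + 1 ∨ k = (N : ℤ) + 2 := by omega
      rcases this with rfl | rfl <;> simp [hn1, hn2]
  have S2 : ∑ k ∈ Icc (1 : ℤ) ((N : ℤ) + 2), g k * h (k - 1)
      = ∑ k ∈ Icc (1 : ℤ) (N : ℤ), g (k + 1) * h k := by
    have := sum_shift' 0 ((N : ℤ) + 1) 1 (fun k => g k * h (k - 1))
    simp only [zero_add] at this
    rw [show ((N:ℤ) + 1 + 1) = (N:ℤ) + 2 by ring] at this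
    simp only [add_sub_cancel_right] at this
    rw [← this]
    symm
    apply Finset.sum_subset
    · intro k hk; simp only [mem_Icc] at *; omega
    · intro k hk hk'; simp only [mem_Icc] at *
      have : k = 0 ∨ k = (N : ℤ) + 1 := by omega
      rcases this with rfl | rfl <;> simp [h0, hn1]
  have S3 : ∑ k ∈ Icc (1 : ℤ) ((N : ℤ) + 2), g k * h (k - 2)
      = ∑ k ∈ Icc (1 : ℤ) (N : ℤ), g (k + 2) * h k := by
    have := sum_shift' (-1) ((N : ℤ)) 2 (fun k => g k * h (k - 2))
    rw [show ((-1 : ℤ) + 2) = 1 by ring] at this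
    simp only [add_sub_cancel_right] at this
    rw [← this]
    symm
    apply Finset.sum_subset
    · intro k hk; simp only [mem_Icc] at *; omega
    · intro k hk hk'; simp only [mem_Icc] at *
      have : k = -1 ∨ k = 0 := by omega
      rcases this with rfl | rfl <;> simp [h1, h0]
  have expand : ∀ k : ℤ, g k * fd2 h (k - 2)
      = g k * h k - 2 * (g k * h (k - 1)) + g k * h (k - 2) := by
    intro k
    simp only [fd2, show (k - 2 + 2) = k by ring, show (k - 2 + 1) = k - 1 by ring]
    ring
  simp only [expand, Finset.sum_add_distrib, Finset.sum_sub_distrib, ← Finset.mul_sum,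
    S1, S2, S3]
  rw [Finset.mul_sum, ← Finset.sum_sub_distrib, ← Finset.sum_add_distrib]
  apply Finset.sum_congr rfl
  intro k _
  simp only [fd2]; ring

lemma sbp1 (N : ℕ) (g h : ℤ → ℝ) (hh : bc N h) :
    - ∑ k ∈ Icc (1 : ℤ) ((N : ℤ) + 1), g k * fd h (k - 1)
      = ∑ k ∈ Icc (1 : ℤ) (N : ℤ), fd g k * h k := by
  obtain ⟨h1, h0, hn1, hn2⟩ := hh
  have S1 : ∑ k ∈ Icc (1 : ℤ) ((N : ℤ) + 1), g k * h k
      = ∑ k ∈ Icc (1 : ℤ) (N : ℤ), g k * h k := by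
    symm
    apply Finset.sum_subset
    · intro k hk; simp only [mem_Icc] at *; omega
    · intro k hk hk'; simp only [mem_Icc] at *
      have : k = (N : ℤ) + 1 := by omega
      subst this; simp [hn1]
  have S2 : ∑ k ∈ Icc (1 : ℤ) ((N : ℤ) + 1), g k * h (k - 1)
      = ∑ k ∈ Icc (1 : ℤ) (N : ℤ), g (k + 1) * h k := by
    have := sum_shift' 0 ((N : ℤ)) 1 (fun k => g k * h (k - 1))
    simp only [zero_add] at this
    simp only [add_sub_cancel_right] at this
    rw [← this]
    symm
    apply Finset.sum_subset
    · intro k hk; simp only [mem_Icc] at *; omega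
    · intro k hk hk'; simp only [mem_Icc] at *
      have : k = 0 := by omega
      subst this; simp [h0]
  have expand : ∀ k : ℤ, g k * fd h (k - 1)
      = g k * h k - g k * h (k - 1) := by
    intro k
    simp only [fd, show (k - 1 + 1) = k by ring]
    ring
  simp only [expand, Finset.sum_sub_distrib, S1, S2]
  rw [neg_sub, ← Finset.sum_sub_distrib]
  apply Finset.sum_congr rfl
  intro k _
  simp only [fd]; ring

lemma sq_term_deriv (c a b : ℝ) :
    HasDerivAt (fun ε : ℝ => c / 2 * (a + ε * b) ^ 2) (c * a * b) 0 := by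
  have h1 : HasDerivAt (fun ε : ℝ => a + ε * b) b 0 := by
    simpa using ((hasDerivAt_id (0 : ℝ)).mul_const b).const_add a
  have h2 := (h1.fun_pow 2).const_mul (c / 2)
  refine h2.congr_deriv ?_
  simp; ring

lemma Fint_term_deriv (f : ℤ → ℝ → ℝ) (k : ℤ) (hf : Continuous (f k)) (a b : ℝ) :
    HasDerivAt (fun ε : ℝ => Fint f k (a + ε * b)) (f k a * b) 0 := by
  have h1 : HasDerivAt (fun ε : ℝ => a + ε * b) b 0 := by
    simpa using ((hasDerivAt_id (0 : ℝ)).mul_const b).const_add a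
  have h2 : HasDerivAt (fun s : ℝ => Fint f k s) (f k a) a := by
    apply intervalIntegral.integral_hasDerivAt_right
      (hf.intervalIntegrable _ _)
      (hf.stronglyMeasurableAtFilter _ _)
      hf.continuousAt
  have := HasDerivAt.comp 0 (by simpa using h2) h1
  simpa [mul_comm, Function.comp_def] using this

/-- Summation-by-parts form of the Gateaux derivative:
`δJ(y;h) = ∑_{k=1}^{N} [Δ²(p(k)Δ²y(k-2)) + Δ(q(k)Δy(k-1)) + f(k,y(k))]·h(k)`. -/
theorem stmt_8 (N : ℕ) (hN : 1 ≤ N) (p q : ℤ → ℝ) (f : ℤ → ℝ → ℝ)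
    (hf : ∀ k ∈ Finset.Icc (1 : ℤ) (N : ℤ), Continuous (f k))
    (y h : ℤ → ℝ) (hy : bc N y) (hh : bc N h) :
    HasDerivAt (fun ε : ℝ => J N p q f (fun k => y k + ε * h k))
      (∑ k ∈ Finset.Icc (1 : ℤ) (N : ℤ),
        (fd2 (fun j => p j * fd2 y (j - 2)) k
          + fd (fun j => q j * fd y (j - 1)) k + f k (y k)) * h k) 0 := by
  set DA : ℝ := ∑ k ∈ Icc (1 : ℤ) ((N : ℤ) + 2),
    p k * fd2 y (k - 2) * fd2 h (k - 2) with hDA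
  set DB : ℝ := ∑ k ∈ Icc (1 : ℤ) ((N : ℤ) + 1),
    q k * fd y (k - 1) * fd h (k - 1) with hDB
  set DC : ℝ := ∑ k ∈ Icc (1 : ℤ) (N : ℤ), f k (y k) * h k with hDC
  have feq : (fun ε : ℝ => J N p q f (fun k => y k + ε * h k))
      = fun ε : ℝ =>
        (∑ k ∈ Icc (1 : ℤ) ((N : ℤ) + 2),
          p k / 2 * (fd2 y (k - 2) + ε * fd2 h (k - 2)) ^ 2)
        - (∑ k ∈ Icc (1 : ℤ) ((N : ℤ) + 1),
          q k / 2 * (fd y (k - 1) + ε * fd h (k - 1)) ^ 2)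
        + ∑ k ∈ Icc (1 : ℤ) (N : ℤ), Fint f k (y k + ε * h k) := by
    funext ε
    simp only [J]
    congr 2
    · apply Finset.sum_congr rfl
      intro k _
      simp only [fd2]; ring_nf
    · apply Finset.sum_congr rfl
      intro k _
      simp only [fd]; ring_nf
  rw [feq]
  have dA : HasDerivAt (fun ε : ℝ => ∑ k ∈ Icc (1 : ℤ) ((N : ℤ) + 2),
      p k / 2 * (fd2 y (k - 2) + ε * fd2 h (k - 2)) ^ 2) DA 0 :=
    HasDerivAt.fun_sum fun k _ => sq_term_deriv (p k) (fd2 y (k - 2)) (fd2 h (k - 2))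
  have dB : HasDerivAt (fun ε : ℝ => ∑ k ∈ Icc (1 : ℤ) ((N : ℤ) + 1),
      q k / 2 * (fd y (k - 1) + ε * fd h (k - 1)) ^ 2) DB 0 :=
    HasDerivAt.fun_sum fun k _ => sq_term_deriv (q k) (fd y (k - 1)) (fd h (k - 1))
  have dC : HasDerivAt (fun ε : ℝ => ∑ k ∈ Icc (1 : ℤ) (N : ℤ),
      Fint f k (y k + ε * h k)) DC 0 :=
    HasDerivAt.fun_sum fun k hk => Fint_term_deriv f k (hf k hk) (y k) (h k)
  have key := (dA.sub dB).add dC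
  have eqD : DA - DB + DC = ∑ k ∈ Finset.Icc (1 : ℤ) (N : ℤ),
      (fd2 (fun j => p j * fd2 y (j - 2)) k
        + fd (fun j => q j * fd y (j - 1)) k + f k (y k)) * h k := by
    have eA : DA = ∑ k ∈ Icc (1 : ℤ) (N : ℤ),
        fd2 (fun j => p j * fd2 y (j - 2)) k * h k := by
      rw [hDA, ← sbp2 N (fun j => p j * fd2 y (j - 2)) h hh]
    have eB : -DB = ∑ k ∈ Icc (1 : ℤ) (N : ℤ),
        fd (fun j => q j * fd y (j - 1)) k * h k := by
      rw [hDB, ← sbp1 N (fun j => q j * fd y (j - 1)) h hh]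
    rw [sub_eq_add_neg, eA, eB, hDC, ← Finset.sum_add_distrib, ← Finset.sum_add_distrib]
    apply Finset.sum_congr rfl
    intro k _
    ring
  rw [← eqD]
  exact key
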